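/- arXiv:1006.4352 — 2 statements merged into one kernel-verified Lean document; each statement's English description precedes it below -/
import Mathlib

section
/- Let y ∈ ℝ^m, let k ≥ 1, and let D be a finite-dimensional linear subspace of R = C^∞(ℝ^m,ℝ) which is complementary to the ideal (𝔪_y)^k, i.e., D + (𝔪_y)^k = R and D ∩ (𝔪_y)^k = 0. Then there exists an open neighborhood U of y such that for every tuple (x₁, …, x_k) ∈ U^k one has D + ⋂_{z} (𝔪_z)^{m_z} = R, where z ranges over the distinct values among x₁, …, x_k and m_z is the number of indices i with x_i = z. -/
open scoped Manifold
open Module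

noncomputable section

/-- The ℝ-algebra of smooth real-valued functions on `ℝ^m`. -/
abbrev SmoothFnsE (m : ℕ) : Type _ :=
  C^(⊤ : ℕ∞)⟮𝓡 m, EuclideanSpace ℝ (Fin m); 𝓘(ℝ, ℝ), ℝ⟯

variable {m : ℕ}

/-- The ideal `𝔪ₓ` of smooth functions on `ℝ^m` vanishing at the point `x`. -/
def mIdealE (x : EuclideanSpace ℝ (Fin m)) : Ideal (SmoothFnsE m) where
  carrier := {f | f x = 0}
  add_mem' := by intro f g hf hg; simp_all
  zero_mem' := by simp
  smul_mem' := by intro c f hf; simp_all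

/-- The ideal `⋂_z (𝔪_z)^{m_z}` associated to a tuple `x` of points of `ℝ^m`, where `m_z` is
the number of indices `i` with `x i = z` (for `z` not among the `x i` the factor is the unit
ideal). -/
def mTupleIdealE {k : ℕ} (x : Fin k → EuclideanSpace ℝ (Fin m)) : Ideal (SmoothFnsE m) :=
  ⨅ z : EuclideanSpace ℝ (Fin m), (mIdealE z) ^ (Nat.card {i : Fin k // x i = z})

/-! ### Auxiliary material -/

open scoped ContDiff
open MeasureTheory Metric intervalIntegral

set_option synthInstance.maxHeartbeats 1000000
set_option maxHeartbeats 1000000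

section ParametricIntegral

variable {E : Type} [NormedAddCommGroup E] [NormedSpace ℝ E] [FiniteDimensional ℝ E]

theorem contDiff_parametric_integral_nat (n : ℕ) :
    ∀ {B : Type} [NormedAddCommGroup B] [NormedSpace ℝ B] [CompleteSpace B]
      (F : E × ℝ → B), ContDiff ℝ ∞ F →
      ContDiff ℝ n (fun x : E => ∫ s in (0:ℝ)..1, F (x, s)) := by
  induction n with
  | zero =>
    intro B _ _ _ F hF
    rw [Nat.cast_zero, contDiff_zero, continuous_iff_continuousAt]
    intro x₀
    obtain ⟨C, hC⟩ := ((isCompact_closedBall x₀ 1).prod (isCompact_uIcc (a := (0:ℝ))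
      (b := 1))).exists_bound_of_continuousOn hF.continuous.continuousOn
    apply continuousAt_of_dominated_interval (bound := fun _ => C)
    · filter_upwards with x
      exact (hF.continuous.comp (Continuous.prodMk_right x)).aestronglyMeasurable
    · filter_upwards [closedBall_mem_nhds x₀ one_pos] with x hx
      filter_upwards with t ht
      exact hC (x, t) ⟨hx, Set.uIoc_subset_uIcc ht⟩
    · exact intervalIntegrable_const
    · filter_upwards with t ht
      exact (hF.continuous.comp (Continuous.prodMk_left t)).continuousAt
  | succ n ih =>
    intro B _ _ _ F hF
    have hfd : ContDiff ℝ ∞ (fderiv ℝ F) := hF.fderiv_right (by simp)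
    set F' : E × ℝ → (E →L[ℝ] B) :=
      fun p => (fderiv ℝ F p).comp (ContinuousLinearMap.inl ℝ E ℝ) with hF'def
    have hF' : ContDiff ℝ ∞ F' := by
      exact (((ContinuousLinearMap.compL ℝ E (E × ℝ) B).flip
        (ContinuousLinearMap.inl ℝ E ℝ)).contDiff).comp hfd
    have key : ∀ x₀ : E, HasFDerivAt (fun x => ∫ s in (0:ℝ)..1, F (x, s))
        (∫ s in (0:ℝ)..1, F' (x₀, s)) x₀ := by
      intro x₀
      obtain ⟨C, hC⟩ := ((isCompact_closedBall x₀ 1).prod (isCompact_uIcc (a := (0:ℝ))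
        (b := 1))).exists_bound_of_continuousOn hF'.continuous.continuousOn
      apply intervalIntegral.hasFDerivAt_integral_of_dominated_of_fderiv_le
        (F := fun x s => F (x, s)) (F' := fun x s => F' (x, s)) (s := ball x₀ 1) (ball_mem_nhds x₀ one_pos)
        (bound := fun _ => C)
      · filter_upwards with x
        exact (hF.continuous.comp (Continuous.prodMk_right x)).aestronglyMeasurable
      · exact (hF.continuous.comp (Continuous.prodMk_right x₀)).intervalIntegrable 0 1
      · exact (hF'.continuous.comp (Continuous.prodMk_right x₀)).aestronglyMeasurable
      · filter_upwards with t ht x hx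
        exact hC (x, t) ⟨ball_subset_closedBall hx, Set.uIoc_subset_uIcc ht⟩
      · exact intervalIntegrable_const
      · filter_upwards with t ht x hx
        have h1 : HasFDerivAt F (fderiv ℝ F (x, t)) (x, t) :=
          (hF.differentiable (by simp)).differentiableAt.hasFDerivAt
        exact h1.comp x (hasFDerivAt_prodMk_left x t)
    rw [show ((n + 1 : ℕ) : WithTop ℕ∞) = (n : WithTop ℕ∞) + 1 by norm_cast,
      contDiff_succ_iff_fderiv]
    refine ⟨fun x => (key x).differentiableAt, by simp, ?_⟩
    have heq : (fderiv ℝ fun x => ∫ s in (0:ℝ)..1, F (x, s))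
        = fun x₀ => ∫ s in (0:ℝ)..1, F' (x₀, s) := funext fun x₀ => (key x₀).fderiv
    rw [heq]
    exact ih _ hF'

theorem contDiff_parametric_integral {B : Type} [NormedAddCommGroup B] [NormedSpace ℝ B]
    [CompleteSpace B] (F : E × ℝ → B) (hF : ContDiff ℝ ∞ F) :
    ContDiff ℝ ∞ (fun x : E => ∫ s in (0:ℝ)..1, F (x, s)) := by
  rw [contDiff_infty]
  exact fun n => contDiff_parametric_integral_nat n F hF

end ParametricIntegral

local notation "Em" => EuclideanSpace ℝ (Fin m)

theorem mem_mIdealE {x : Em} {f : SmoothFnsE m} : f ∈ mIdealE x ↔ f x = 0 := Iff.rfl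

def toSm (f : Em → ℝ) (hf : ContDiff ℝ ∞ f) : SmoothFnsE m :=
  ⟨f, hf.contMDiff⟩

@[simp] theorem toSm_apply (f : Em → ℝ) (hf : ContDiff ℝ ∞ f) (t : Em) : toSm f hf t = f t := rfl

theorem contDiff_mvpoly (g : MvPolynomial (Fin m) ℝ) :
    ContDiff ℝ ∞ (fun t : Em => MvPolynomial.eval (fun j => t j) g) := by
  induction g using MvPolynomial.induction_on with
  | C a => simpa using contDiff_const
  | add p q hp hq => simpa using hp.add hq
  | mul_X p j hp =>
      simp only [map_mul, MvPolynomial.eval_X]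
      exact hp.mul (EuclideanSpace.proj j : Em →L[ℝ] ℝ).contDiff

def polyFn (g : MvPolynomial (Fin m) ℝ) : SmoothFnsE m :=
  toSm _ (contDiff_mvpoly g)

@[simp] theorem polyFn_apply (g : MvPolynomial (Fin m) ℝ) (t : Em) :
    polyFn g t = MvPolynomial.eval (fun j => t j) g := rfl

def coordFn (j : Fin m) : SmoothFnsE m :=
  toSm (fun t => t j) (EuclideanSpace.proj j : Em →L[ℝ] ℝ).contDiff

def constFn (a : ℝ) : SmoothFnsE m := toSm (fun _ => a) contDiff_const

theorem smoothfns_sum_apply {ι : Type*} (s : Finset ι) (F : ι → SmoothFnsE m) (t : Em) :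
    (∑ i ∈ s, F i) t = ∑ i ∈ s, F i t :=
  map_sum (ContMDiffMap.evalRingHom t) F s

theorem hadamard_step {Q : Type} [NormedAddCommGroup Q] [NormedSpace ℝ Q]
    [FiniteDimensional ℝ Q] (F : Em × Q → ℝ) (hF : ContDiff ℝ ∞ F) :
    ∃ G : Fin m → (Em × (Em × Q)) → ℝ,
      (∀ j, ContDiff ℝ ∞ (G j)) ∧
      ∀ (t x : Em) (q : Q), F (t, q) = F (x, q) + ∑ j, (t j - x j) * G j (t, (x, q)) := by
  classical
  set γ : (Em × (Em × Q)) × ℝ → Em × Q :=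
    fun z => (z.1.2.1 + z.2 • (z.1.1 - z.1.2.1), z.1.2.2) with hγ
  have hγs : ContDiff ℝ ∞ γ := by
    apply ContDiff.prodMk
    · exact (contDiff_fst.comp contDiff_snd |>.comp contDiff_fst).add
        (contDiff_snd.smul ((contDiff_fst.comp contDiff_fst).sub
          (contDiff_fst.comp contDiff_snd |>.comp contDiff_fst)))
    · exact contDiff_snd.comp (contDiff_snd.comp contDiff_fst)
  set H : Fin m → (Em × (Em × Q)) × ℝ → ℝ :=
    fun j z => fderiv ℝ F (γ z) (EuclideanSpace.single j 1, (0 : Q)) with hH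
  have hfd : ContDiff ℝ ∞ (fderiv ℝ F) := hF.fderiv_right (by simp)
  have hHs : ∀ j, ContDiff ℝ ∞ (H j) := by
    intro j
    exact (ContinuousLinearMap.apply ℝ ℝ ((EuclideanSpace.single j 1 : Em), (0 : Q))).contDiff.comp
      (hfd.comp hγs)
  refine ⟨fun j p => ∫ s in (0:ℝ)..1, H j (p, s),
    fun j => contDiff_parametric_integral _ (hHs j), ?_⟩
  intro t x q
  set φ : ℝ → ℝ := fun s => F (x + s • (t - x), q) with hφ
  have hder : ∀ s : ℝ, HasDerivAt φ (fderiv ℝ F (x + s • (t - x), q) (t - x, (0 : Q))) s := by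
    intro s
    have h1 : HasDerivAt (fun s : ℝ => x + s • (t - x)) (t - x) s := by
      have := (hasDerivAt_id s).smul_const (t - x)
      simpa using this.const_add x
    have h2 : HasDerivAt (fun s : ℝ => ((x + s • (t - x) : Em), q)) ((t - x, (0:Q))) s :=
      h1.prodMk (hasDerivAt_const s q)
    have h3 : HasFDerivAt F (fderiv ℝ F (x + s • (t - x), q)) (x + s • (t - x), q) :=
      (hF.differentiable (by simp)).differentiableAt.hasFDerivAt
    exact h3.comp_hasDerivAt s h2
  have hcont : Continuous fun s : ℝ => fderiv ℝ F (x + s • (t - x), q) (t - x, (0:Q)) := by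
    have : Continuous fun s : ℝ => ((x + s • (t - x) : Em), q) := by fun_prop
    exact ((ContinuousLinearMap.apply ℝ ℝ ((t - x : Em), (0:Q))).continuous).comp
      (hfd.continuous.comp this)
  have hFTC : ∫ s in (0:ℝ)..1, fderiv ℝ F (x + s • (t - x), q) (t - x, (0:Q))
      = φ 1 - φ 0 := by
    apply intervalIntegral.integral_eq_sub_of_hasDerivAt
    · intro s _; exact hder s
    · exact hcont.intervalIntegrable 0 1
  have hdecomp : ∀ s : ℝ, fderiv ℝ F (x + s • (t - x), q) (t - x, (0:Q))
      = ∑ j, (t j - x j) * H j ((t, (x, q)), s) := by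
    intro s
    have h1 : (t - x : Em) = ∑ j, (t j - x j) • (EuclideanSpace.single j 1 : Em) := by
      have := ((EuclideanSpace.basisFun (Fin m) ℝ).sum_repr (t - x)).symm
      simpa [EuclideanSpace.basisFun_repr, EuclideanSpace.basisFun_apply] using this
    have hv : ((t - x : Em), (0:Q))
        = ∑ j, (t j - x j) • ((EuclideanSpace.single j 1 : Em), (0:Q)) := by
      refine Prod.ext ?_ ?_
      · simpa [Prod.fst_sum] using h1
      · simp [Prod.snd_sum]
    rw [hv, map_sum]
    refine Finset.sum_congr rfl fun j _ => ?_
    rw [ContinuousLinearMap.map_smul]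
    simp [H, γ, smul_eq_mul]
  have : ∫ s in (0:ℝ)..1, fderiv ℝ F (x + s • (t - x), q) (t - x, (0:Q))
      = ∑ j, (t j - x j) * ∫ s in (0:ℝ)..1, H j ((t, (x, q)), s) := by
    rw [intervalIntegral.integral_congr (g := fun s => ∑ j, (t j - x j) * H j ((t, (x, q)), s))
      (fun s _ => hdecomp s)]
    rw [intervalIntegral.integral_finset_sum]
    · exact Finset.sum_congr rfl fun j _ => intervalIntegral.integral_const_mul _ _
    · intro j _
      exact (continuous_const.mul ((hHs j).continuous.comp (by fun_prop))).intervalIntegrable 0 1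
  have e1 : φ 1 = F (t, q) := by simp [φ]
  have e0 : φ 0 = F (x, q) := by simp [φ]
  rw [← this, hFTC, e1, e0]
  ring

/-- Newton–Hadamard expansion with parameters. -/
theorem lemmaA (k : ℕ) :
    ∀ (Q : Type) [NormedAddCommGroup Q] [NormedSpace ℝ Q] [FiniteDimensional ℝ Q]
      (F : Em × Q → ℝ), ContDiff ℝ ∞ F →
      ∃ (ι : Type) (_ : Fintype ι) (g : ι → MvPolynomial (Fin m) ℝ)
        (c : (Fin k → Em) → Q → ι → ℝ),
        (∀ i, (g i).totalDegree < k) ∧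
        (∀ i, Continuous (fun p : (Fin k → Em) × Q => c p.1 p.2 i)) ∧
        (∀ (x : Fin k → Em) (q : Q), ∃ r : SmoothFnsE m,
           r ∈ (∏ i : Fin k, mIdealE (x i)) ∧
           ∀ t : Em, F (t, q) = (∑ i, c x q i * (polyFn (g i)) t) + r t) := by
  induction k with
  | zero =>
    intro Q _ _ _ F hF
    refine ⟨Fin 0, inferInstance, fun i => i.elim0, fun _ _ i => i.elim0,
      fun i => i.elim0, fun i => i.elim0, fun x q => ?_⟩
    refine ⟨toSm (fun t => F (t, q)) (hF.comp (contDiff_id.prodMk contDiff_const)), ?_, ?_⟩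
    · simp [Finset.univ_eq_empty, Ideal.one_eq_top]
    · intro t; simp
  | succ k ih =>
    intro Q _ _ _ F hF
    obtain ⟨G, hGs, hGeq⟩ := hadamard_step F hF
    choose ι ifin g c hdeg hcont hrep using fun j => ih (Em × Q) (G j) (hGs j)
    letI : ∀ j, Fintype (ι j) := ifin
    refine ⟨Unit ⊕ (Σ j : Fin m, (ι j ⊕ ι j)), inferInstance,
      Sum.elim (fun _ => 1) (fun ⟨j, i⟩ => Sum.elim (fun i => MvPolynomial.X j * g j i) (g j) i),
      fun x q => Sum.elim (fun _ => F (x 0, q))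
        (fun ⟨j, i⟩ => Sum.elim (fun i => c j (fun l => x l.succ) (x 0, q) i)
          (fun i => - (x 0 j) * c j (fun l => x l.succ) (x 0, q) i) i),
      ?_, ?_, ?_⟩
    · rintro (u | ⟨j, i | i⟩)
      · simpa using Nat.succ_pos k
      · refine lt_of_le_of_lt (MvPolynomial.totalDegree_mul _ _) ?_
        have := hdeg j i
        have hX : (MvPolynomial.X j : MvPolynomial (Fin m) ℝ).totalDegree = 1 :=
          MvPolynomial.totalDegree_X j
        omega
      · exact lt_trans (hdeg j i) (Nat.lt_succ_self k)
    · have hbase : Continuous (fun p : (Fin (k+1) → Em) × Q =>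
          ((fun l => p.1 l.succ, (p.1 0, p.2)) : (Fin k → Em) × (Em × Q))) := by
        refine Continuous.prodMk (continuous_pi fun l => ?_) (Continuous.prodMk ?_ ?_)
        · exact (continuous_apply _).comp continuous_fst
        · exact (continuous_apply _).comp continuous_fst
        · exact continuous_snd
      rintro (u | ⟨j, i | i⟩)
      · exact hF.continuous.comp
          (((continuous_apply _).comp continuous_fst).prodMk continuous_snd)
      · exact (hcont j i).comp hbase
      · exact (((EuclideanSpace.proj j : Em →L[ℝ] ℝ).continuous.comp
          ((continuous_apply (0 : Fin (k+1))).comp continuous_fst)).neg).mul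
          ((hcont j i).comp hbase)
    · intro x q
      choose r hrmem hreq using fun j => hrep j (fun l => x l.succ) (x 0, q)
      refine ⟨∑ j, (coordFn j - constFn (x 0 j)) * r j, ?_, ?_⟩
      · rw [Fin.prod_univ_succ]
        refine Ideal.sum_mem _ fun j _ => Ideal.mul_mem_mul ?_ (hrmem j)
        rw [mem_mIdealE]
        show coordFn j (x 0) - constFn (x 0 j) (x 0) = (0 : ℝ)
        exact sub_self _
      · intro t
        have ev : ∀ (h : Fin m → SmoothFnsE m),
            (∑ j, h j) t = ∑ j, h j t := fun h =>
          map_sum (ContMDiffMap.evalRingHom (t : Em)) h Finset.univ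
        rw [hGeq t (x 0) q, ev]
        simp only [hreq, Fintype.sum_sum_type, ← Finset.univ_sigma_univ, Finset.sum_sigma,
          Sum.elim_inl, Sum.elim_inr]
        have evsub : ∀ (j : Fin m), ((coordFn j - constFn (x 0 j)) * r j : SmoothFnsE m) t
            = (t j - x 0 j) * r j t := by
          intro j
          rfl
        simp only [evsub]
        have hP1 : (polyFn (1 : MvPolynomial (Fin m) ℝ) : SmoothFnsE m) t = 1 := by simp
        have hPX : ∀ (j : Fin m) (i : ι j), (polyFn (MvPolynomial.X j * g j i) : SmoothFnsE m) t
            = t j * (polyFn (g j i)) t := by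
          intro j i; simp
        simp only [hP1, hPX]
        rw [Finset.sum_const, Finset.card_univ]
        simp only [Fintype.card_unit, one_smul, mul_one]
        have hmain : ∀ j : Fin m, (t j - x 0 j) *
              ((∑ i, c j (fun l => x l.succ) (x 0, q) i * (polyFn (g j i)) t) + r j t)
            = ((∑ i, c j (fun l => x l.succ) (x 0, q) i * (t j * (polyFn (g j i)) t))
                + ∑ i, (-(x 0 j) * c j (fun l => x l.succ) (x 0, q) i) * (polyFn (g j i)) t)
              + (t j - x 0 j) * r j t := by
          intro j
          rw [mul_add]
          congr 1
          rw [Finset.mul_sum, ← Finset.sum_add_distrib]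
          exact Finset.sum_congr rfl fun i _ => by ring
        simp only [hmain]
        rw [Finset.sum_add_distrib]
        ring

/-- Functions in `𝔪_y^k` satisfy a growth bound of order `k` at `y`. -/
theorem bound_of_mem_pow (y : Em) : ∀ (k : ℕ), ∀ f ∈ (mIdealE y) ^ k,
    ∃ C : ℝ, 0 ≤ C ∧ ∀ t : Em, dist t y ≤ 1 → |f t| ≤ C * dist t y ^ k := by
  intro k
  induction k with
  | zero =>
    intro f _
    obtain ⟨C, hC⟩ := (isCompact_closedBall y 1).exists_bound_of_continuousOn
      (f.contMDiff.continuous.continuousOn (s := closedBall y 1))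
    refine ⟨max C 0, le_max_right _ _, fun t ht => ?_⟩
    have h := hC t ht
    simp only [Real.norm_eq_abs] at h
    simp only [pow_zero, mul_one]
    exact h.trans (le_max_left _ _)
  | succ k ih =>
    intro f hf
    rw [pow_succ] at hf
    refine Submodule.mul_induction_on hf ?_ ?_
    · intro a ha b hb
      obtain ⟨C₁, hC₁0, hC₁⟩ := ih a ha
      have hbc : ContDiff ℝ ∞ (b : Em → ℝ) := contMDiff_iff_contDiff.mp b.contMDiff
      have hdiff : ∀ p : Em, DifferentiableAt ℝ (b : Em → ℝ) p :=
        fun p => (hbc.differentiable (by simp)).differentiableAt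
      have hbd : ContDiff ℝ ∞ (fderiv ℝ (b : Em → ℝ)) := hbc.fderiv_right (by simp)
      obtain ⟨L, hL⟩ := (isCompact_closedBall y 1).exists_bound_of_continuousOn
        (hbd.continuous.continuousOn (s := closedBall y 1))
      have hL0 : 0 ≤ L := le_trans (norm_nonneg _) (hL y (mem_closedBall_self zero_le_one))
      refine ⟨C₁ * L, mul_nonneg hC₁0 hL0, fun t ht => ?_⟩
      have hb0 : b y = 0 := hb
      have hlip : |b t| ≤ L * dist t y := by
        have := (convex_closedBall y 1).norm_image_sub_le_of_norm_fderiv_le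
          (fun p _ => hdiff p) hL (mem_closedBall_self zero_le_one) ht
        simpa [hb0, Real.norm_eq_abs, dist_eq_norm] using this
      have hab : ((a * b : SmoothFnsE m) t : ℝ) = a t * b t := by simp
      rw [hab, abs_mul]
      calc |a t| * |b t| ≤ (C₁ * dist t y ^ k) * (L * dist t y) :=
            mul_le_mul (hC₁ t ht) hlip (abs_nonneg _)
              (mul_nonneg hC₁0 (pow_nonneg dist_nonneg _))
        _ = C₁ * L * dist t y ^ (k + 1) := by ring
    · rintro a b ⟨C₁, h10, h1⟩ ⟨C₂, h20, h2⟩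
      refine ⟨C₁ + C₂, by positivity, fun t ht => ?_⟩
      have hab : ((a + b : SmoothFnsE m) t : ℝ) = a t + b t := by simp
      rw [hab]
      calc |a t + b t| ≤ |a t| + |b t| := abs_add_le _ _
        _ ≤ C₁ * dist t y ^ (k+1) + C₂ * dist t y ^ (k+1) := add_le_add (h1 t ht) (h2 t ht)
        _ = (C₁ + C₂) * dist t y ^ (k+1) := by ring

/-- One-variable: a polynomial of degree `< k` bounded by `C s^k` near `0⁺` is zero. -/
theorem poly1_zero : ∀ (k : ℕ) (r : Polynomial ℝ), r.natDegree < k →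
    (∃ C : ℝ, ∀ s : ℝ, 0 < s → s ≤ 1 → |r.eval s| ≤ C * s ^ k) → r = 0 := by
  intro k
  induction k with
  | zero => intro r h; omega
  | succ k ih =>
    rintro r hdeg ⟨C, hC⟩
    have h0 : r.eval 0 = 0 := by
      have t1 : Filter.Tendsto (fun s : ℝ => C * s ^ (k+1)) (nhdsWithin 0 (Set.Ioi 0))
          (nhds 0) := by
        have hcont : Continuous (fun s : ℝ => C * s ^ (k+1)) := by fun_prop
        have h := hcont.tendsto (0:ℝ)
        simpa using h.mono_left nhdsWithin_le_nhds
      have t2 : Filter.Tendsto (fun s : ℝ => |r.eval s|) (nhdsWithin 0 (Set.Ioi 0))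
          (nhds (|r.eval 0|)) :=
        ((r.continuous.abs).tendsto 0).mono_left nhdsWithin_le_nhds
      have hev : ∀ᶠ s in nhdsWithin 0 (Set.Ioi 0), |r.eval s| ≤ C * s ^ (k+1) := by
        filter_upwards [Ioo_mem_nhdsGT_of_mem (Set.mem_Ico.mpr ⟨le_refl 0, one_pos⟩)] with s hs
        exact hC s hs.1 (le_of_lt hs.2)
      have hle : |r.eval 0| ≤ 0 := le_of_tendsto_of_tendsto t2 t1 hev
      exact abs_eq_zero.mp (le_antisymm hle (abs_nonneg _))
    by_cases hr0 : r = 0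
    · exact hr0
    obtain ⟨r₁, hr₁⟩ := (Polynomial.X_dvd_iff (f := r)).mpr
      (by rw [Polynomial.coeff_zero_eq_eval_zero]; exact h0)
    have hr₁0 : r₁ ≠ 0 := by rintro rfl; rw [mul_zero] at hr₁; exact hr0 hr₁
    have hd : r₁.natDegree < k := by
      have hmul := Polynomial.natDegree_mul (Polynomial.X_ne_zero (R := ℝ)) hr₁0
      rw [← hr₁] at hmul
      rw [Polynomial.natDegree_X] at hmul
      omega
    have hzero : r₁ = 0 := by
      refine ih r₁ hd ⟨C, fun s hs hs1 => ?_⟩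
      have hev : r.eval s = s * r₁.eval s := by rw [hr₁]; simp
      have hb := hC s hs hs1
      rw [hev, abs_mul, abs_of_pos hs] at hb
      have : s * |r₁.eval s| ≤ s * (C * s ^ k) := by
        calc s * |r₁.eval s| ≤ C * s ^ (k+1) := hb
          _ = s * (C * s ^ k) := by ring
      exact le_of_mul_le_mul_left this hs
    rw [hr₁, hzero, mul_zero]

theorem eval_aeval_line (y v : Fin m → ℝ) (p : MvPolynomial (Fin m) ℝ) (s : ℝ) :
    Polynomial.eval s (MvPolynomial.aeval
        (fun j => Polynomial.C (y j) + Polynomial.C (v j) * Polynomial.X) p)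
      = MvPolynomial.eval (fun j => y j + s * v j) p := by
  induction p using MvPolynomial.induction_on with
  | C a => simp
  | add f g hf hg => simp [hf, hg]
  | mul_X f j hf =>
      simp only [map_mul, MvPolynomial.aeval_X, MvPolynomial.eval_X, Polynomial.eval_mul,
        Polynomial.eval_add, Polynomial.eval_C, Polynomial.eval_X, hf]
      ring

/-- Multivariable vanishing: a polynomial of total degree `< k` whose associated smooth
function lies in `𝔪_y^k` is zero. -/
theorem poly_vanish (k : ℕ) (y : Em) (p : MvPolynomial (Fin m) ℝ)
    (hdeg : p.totalDegree < k) (hmem : polyFn p ∈ (mIdealE y) ^ k) : p = 0 := by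
  obtain ⟨C, hC0, hC⟩ := bound_of_mem_pow y k (polyFn p) hmem
  have key : ∀ v : Em, ‖v‖ ≤ 1 → ∀ s : ℝ,
      MvPolynomial.eval (fun j => y j + s * v j) p = 0 := by
    intro v hv
    set rv : Polynomial ℝ :=
      MvPolynomial.aeval (fun j => Polynomial.C (y j) + Polynomial.C (v j) * Polynomial.X) p
      with hrv
    have hev : ∀ s : ℝ, rv.eval s = MvPolynomial.eval (fun j => y j + s * v j) p :=
      fun s => eval_aeval_line (fun j => y j) (fun j => v j) p s
    have hdeg' : rv.natDegree < k := by
      have hb := MvPolynomial.aeval_natDegree_le (n := 1) p (le_refl p.totalDegree)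
        (fun j => Polynomial.C (y j) + Polynomial.C (v j) * Polynomial.X) (fun j => by
          refine le_trans (Polynomial.natDegree_add_le _ _) (max_le ?_ ?_)
          · simp
          · exact le_trans (Polynomial.natDegree_C_mul_le _ _) (by simp))
      rw [mul_one] at hb
      exact lt_of_le_of_lt hb hdeg
    have hrz : rv = 0 := by
      refine poly1_zero k rv hdeg' ⟨C, fun s hs hs1 => ?_⟩
      have hvmem : dist (y + s • v) y ≤ 1 := by
        rw [dist_eq_norm, add_sub_cancel_left, norm_smul]
        calc ‖s‖ * ‖v‖ ≤ 1 * 1 := by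
              refine mul_le_mul ?_ hv (norm_nonneg _) zero_le_one
              rw [Real.norm_eq_abs, abs_of_pos hs]; exact hs1
          _ = 1 := by ring
      have hb := hC (y + s • v) hvmem
      have happ : (polyFn p : Em → ℝ) (y + s • v)
          = MvPolynomial.eval (fun j => y j + s * v j) p := by
        rw [polyFn_apply]
        have harg : (fun j => (y + s • v : Em) j) = (fun j => y j + s * v j) := by
          funext j; simp [PiLp.add_apply, PiLp.smul_apply]
        rw [harg]
      rw [happ, ← hev] at hb
      have hd : dist (y + s • v) y = ‖s‖ * ‖v‖ := by
        rw [dist_eq_norm, add_sub_cancel_left, norm_smul]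
      rw [hd] at hb
      calc |rv.eval s| ≤ C * (‖s‖ * ‖v‖) ^ k := hb
        _ ≤ C * s ^ k := by
          refine mul_le_mul_of_nonneg_left ?_ hC0
          rw [Real.norm_eq_abs, abs_of_pos hs]
          calc (s * ‖v‖) ^ k ≤ (s * 1) ^ k := by
                refine pow_le_pow_left₀ (by positivity) ?_ k
                exact mul_le_mul_of_nonneg_left hv (le_of_lt hs)
            _ = s ^ k := by ring
    intro s
    rw [← hev s, hrz, Polynomial.eval_zero]
  have hall : ∀ z : Fin m → ℝ, MvPolynomial.eval z p = 0 := by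
    intro z
    set u : Em := WithLp.toLp 2 (fun j => z j - y j : Fin m → ℝ) with hu'
    by_cases hu : u = 0
    · have h := key 0 (by simp) 1
      have harg : (fun j => y j + 1 * (0 : Em) j) = z := by
        funext j
        have h1 : u j = 0 := by rw [hu]; rfl
        have h2 : u j = z j - y j := rfl
        have : z j = y j := by rw [h2] at h1; linarith
        simp [this]
      rwa [harg] at h
    · set c : ℝ := 1 / (1 + ‖u‖) with hc
      have hc0 : 0 < c := by positivity
      have hc' : c ≠ 0 := ne_of_gt hc0
      have hcu : ‖c • u‖ ≤ 1 := by
        rw [norm_smul, Real.norm_eq_abs, abs_of_pos hc0, hc]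
        rw [div_mul_eq_mul_div, one_mul, div_le_one (by positivity)]
        linarith [norm_nonneg u]
      have h := key (c • u) hcu (1 / c)
      have harg : (fun j => y j + 1 / c * (c • u) j) = z := by
        funext j
        have h1 : (c • u) j = c * u j := rfl
        have h2 : u j = z j - y j := rfl
        rw [h1, h2]
        field_simp; ring
      rwa [harg] at h
  exact MvPolynomial.funext (fun z => by rw [hall z, map_zero])

/-- exponent multi-index attached to `w`. -/
def expIdx {k : ℕ} (w : Fin m → Fin k) : Fin m →₀ ℕ :=
  Finsupp.equivFunOnFinite.symm (fun j => (w j : ℕ))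

theorem expIdx_inj {k : ℕ} : Function.Injective (expIdx (m := m) (k := k)) := by
  intro w w' h
  have := Finsupp.equivFunOnFinite.symm.injective h
  funext j
  exact Fin.val_injective (congrFun this j)

theorem rep_lemma {k : ℕ} (g : MvPolynomial (Fin m) ℝ) (hg : g.totalDegree < k) :
    ∑ w : Fin m → Fin k, (MvPolynomial.monomial (expIdx w)) (MvPolynomial.coeff (expIdx w) g)
      = g := by
  classical
  have hsupp : g.support ⊆ Finset.univ.image (expIdx (m := m) (k := k)) := by
    intro δ hδ
    have hsum : (δ.sum fun _ n => n) ≤ g.totalDegree := MvPolynomial.le_totalDegree hδ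
    have hlt : ∀ j, δ j < k := by
      intro j
      by_cases hj : δ j = 0
      · omega
      · have : δ j ≤ δ.sum fun _ n => n := by
          rw [Finsupp.sum]
          exact Finset.single_le_sum (f := fun i => δ i) (fun i _ => Nat.zero_le _)
            (Finsupp.mem_support_iff.mpr hj)
        omega
    refine Finset.mem_image.mpr ⟨fun j => ⟨δ j, hlt j⟩, Finset.mem_univ _, ?_⟩
    refine Finsupp.equivFunOnFinite.symm_apply_eq.mpr ?_
    funext j
    rfl
  calc ∑ w : Fin m → Fin k, (MvPolynomial.monomial (expIdx w)) (MvPolynomial.coeff (expIdx w) g)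
      = ∑ δ ∈ Finset.univ.image (expIdx (m := m) (k := k)),
          (MvPolynomial.monomial δ) (MvPolynomial.coeff δ g) :=
        (Finset.sum_image (f := fun δ => (MvPolynomial.monomial δ) (MvPolynomial.coeff δ g))
          (fun a _ b _ h => expIdx_inj h)).symm
    _ = ∑ δ ∈ g.support, (MvPolynomial.monomial δ) (MvPolynomial.coeff δ g) := by
        refine (Finset.sum_subset hsupp (fun δ _ hδ => ?_)).symm
        rw [MvPolynomial.notMem_support_iff.mp hδ, map_zero]
    _ = g := MvPolynomial.support_sum_monomial_coeff g

theorem prod_le_mTuple {k : ℕ} (x : Fin k → Em) :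
    (∏ i : Fin k, mIdealE (x i)) ≤ mTupleIdealE x := by
  classical
  refine le_iInf fun z => ?_
  have hcard : Nat.card {i : Fin k // x i = z}
      = (Finset.univ.filter (fun i => x i = z)).card := by
    rw [Nat.card_eq_fintype_card, Fintype.card_subtype]
  rw [← Finset.prod_filter_mul_prod_filter_not Finset.univ (fun i => x i = z)]
  have h1 : (∏ i ∈ Finset.univ.filter (fun i => x i = z), mIdealE (x i))
      = mIdealE z ^ (Finset.univ.filter (fun i => x i = z)).card := by
    rw [Finset.prod_congr rfl (fun i hi => by rw [(Finset.mem_filter.mp hi).2]),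
      Finset.prod_const]
  rw [h1, hcard]
  exact Ideal.mul_le_left

/-- If `D` is a finite-dimensional complement of the ideal `(𝔪_y)^k` in
`R = C^∞(ℝ^m,ℝ)`, then there is an open neighbourhood `U` of `y` such that for every tuple
`(x 1, …, x k) ∈ U^k` the subspace `D` is transverse to `⋂_z (𝔪_z)^{m_z}`, the intersection
being over the distinct values `z` among the `x i` with multiplicities `m_z`. -/
theorem exists_nhd_transverse_of_complement
    (m : ℕ) (y : EuclideanSpace ℝ (Fin m)) (k : ℕ) (hk : 1 ≤ k)
    (D : Submodule ℝ (SmoothFnsE m)) (hDfd : FiniteDimensional ℝ D)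
    (hsup : D ⊔ ((mIdealE y ^ k).restrictScalars ℝ) = ⊤)
    (hinf : D ⊓ ((mIdealE y ^ k).restrictScalars ℝ) = ⊥) :
    ∃ U : Set (EuclideanSpace ℝ (Fin m)), IsOpen U ∧ y ∈ U ∧
      ∀ x : Fin k → EuclideanSpace ℝ (Fin m), (∀ i, x i ∈ U) →
        D ⊔ (mTupleIdealE x).restrictScalars ℝ = ⊤ := by
  classical
  set uF : (Fin m → Fin k) → SmoothFnsE m :=
    fun w => polyFn ((MvPolynomial.monomial (expIdx w)) 1) with huF
  have hdec : ∀ w : Fin m → Fin k, ∃ dd ∈ D,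
      ∃ hh ∈ (mIdealE y ^ k).restrictScalars ℝ, uF w = dd + hh := by
    intro w
    have h1 : uF w ∈ D ⊔ (mIdealE y ^ k).restrictScalars ℝ := by rw [hsup]; trivial
    obtain ⟨dd, hdd, hh2, hh2m, heq⟩ := Submodule.mem_sup.mp h1
    exact ⟨dd, hdd, hh2, hh2m, heq.symm⟩
  choose d hdD h hhm hdh using hdec
  have hsm : ∀ w, ContDiff ℝ ∞ (fun p : EuclideanSpace ℝ (Fin m) × ℝ => (h w : EuclideanSpace ℝ (Fin m) → ℝ) p.1) :=
    fun w => (contMDiff_iff_contDiff.mp (h w).contMDiff).comp contDiff_fst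
  choose ι ifin g c hdeg hcont hrep using
    fun w => lemmaA k ℝ (fun p => (h w : EuclideanSpace ℝ (Fin m) → ℝ) p.1) (hsm w)
  letI : ∀ w, Fintype (ι w) := ifin
  set b : (Fin k → EuclideanSpace ℝ (Fin m)) → (Fin m → Fin k) → (Fin m → Fin k) → ℝ :=
    fun xx w w' => ∑ i, c w xx 0 i * MvPolynomial.coeff (expIdx w') (g w i) with hbdef
  have hbcont : ∀ w w', Continuous fun xx : Fin k → EuclideanSpace ℝ (Fin m) => b xx w w' := by
    intro w w'
    apply continuous_finset_sum
    intro i _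
    exact ((hcont w i).comp (continuous_id.prodMk continuous_const)).mul continuous_const
  -- pointwise swap
  have hswap : ∀ (w : Fin m → Fin k) (xx : Fin k → EuclideanSpace ℝ (Fin m)) (t : EuclideanSpace ℝ (Fin m)),
      (∑ i, c w xx 0 i * (polyFn (g w i) : SmoothFnsE m) t)
        = ∑ w', b xx w w' * (uF w' : SmoothFnsE m) t := by
    intro w xx t
    have h1 : ∀ i, ((polyFn (g w i) : SmoothFnsE m) t : ℝ)
        = ∑ w', MvPolynomial.coeff (expIdx w') (g w i) * (uF w' : SmoothFnsE m) t := by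
      intro i
      conv_lhs => rw [polyFn_apply, ← rep_lemma (g w i) (hdeg w i)]
      rw [map_sum]
      refine Finset.sum_congr rfl fun w' _ => ?_
      simp [huF, MvPolynomial.eval_monomial]
    calc (∑ i, c w xx 0 i * (polyFn (g w i) : SmoothFnsE m) t)
        = ∑ i, ∑ w', c w xx 0 i
            * (MvPolynomial.coeff (expIdx w') (g w i) * (uF w' : SmoothFnsE m) t) := by
          refine Finset.sum_congr rfl fun i _ => ?_
          rw [h1 i, Finset.mul_sum]
      _ = ∑ w', ∑ i, c w xx 0 i
            * (MvPolynomial.coeff (expIdx w') (g w i) * (uF w' : SmoothFnsE m) t) :=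
          Finset.sum_comm
      _ = ∑ w', b xx w w' * (uF w' : SmoothFnsE m) t := by
          refine Finset.sum_congr rfl fun w' _ => ?_
          rw [hbdef]
          rw [Finset.sum_mul]
          exact Finset.sum_congr rfl fun i _ => by ring
  -- b vanishes at the diagonal point
  have hb0 : ∀ w w', b (fun _ => y) w w' = 0 := by
    intro w w'
    obtain ⟨r, hrmem, hreq⟩ := hrep w (fun _ => y) 0
    set pw : MvPolynomial (Fin m) ℝ := ∑ i, c w (fun _ => y) 0 i • g w i with hpw
    have hdegpw : pw.totalDegree < k := by
      refine lt_of_le_of_lt (MvPolynomial.totalDegree_finset_sum _ _) ?_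
      refine (Finset.sup_lt_iff (by simp; omega)).mpr fun i _ => ?_
      exact lt_of_le_of_lt (MvPolynomial.totalDegree_smul_le _ _) (hdeg w i)
    have hprodk : (∏ _i : Fin k, mIdealE y) = mIdealE y ^ k := by
      simp [Finset.prod_const, Finset.card_univ]
    have hfn : polyFn pw = h w - r := by
      apply DFunLike.ext
      intro t
      have hval : (h w : EuclideanSpace ℝ (Fin m) → ℝ) t
          = (∑ i, c w (fun _ => y) 0 i * (polyFn (g w i)) t) + r t := hreq t
      have hlhs : (polyFn pw : SmoothFnsE m) t
          = ∑ i, c w (fun _ => y) 0 i * (polyFn (g w i)) t := by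
        rw [polyFn_apply, hpw, map_sum]
        refine Finset.sum_congr rfl fun i _ => ?_
        rw [MvPolynomial.smul_eq_C_mul, map_mul, MvPolynomial.eval_C]
        rfl
      have hrhs : ((h w - r : SmoothFnsE m) t : ℝ) = h w t - r t := by simp
      rw [hlhs, hrhs, hval]; ring
    have hmem : polyFn pw ∈ (mIdealE y) ^ k := by
      rw [hfn]
      refine Submodule.sub_mem _ ?_ ?_
      · exact hhm w
      · exact hprodk ▸ hrmem
    have hpw0 : pw = 0 := poly_vanish k y pw hdegpw hmem
    have hcoeff : b (fun _ => y) w w' = MvPolynomial.coeff (expIdx w') pw := by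
      rw [hbdef, hpw]
      simp [MvPolynomial.coeff_sum, MvPolynomial.coeff_smul, smul_eq_mul]
    rw [hcoeff, hpw0, MvPolynomial.coeff_zero]
  -- the matrix and its determinant
  set A : (Fin k → EuclideanSpace ℝ (Fin m)) → Matrix (Fin m → Fin k) (Fin m → Fin k) ℝ :=
    fun xx => 1 - Matrix.of (fun w w' => b xx w w') with hA
  have hAc : Continuous fun xx : Fin k → EuclideanSpace ℝ (Fin m) => (A xx).det := by
    refine Continuous.matrix_det (continuous_matrix fun w w' => ?_)
    simp only [hA, Matrix.sub_apply, Matrix.of_apply]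
    exact continuous_const.sub (hbcont w w')
  have hdet1 : (A (fun _ => y)).det = 1 := by
    have hAid : A (fun _ => y) = 1 := by
      ext w w'
      simp [hA, hb0]
    rw [hAid, Matrix.det_one]
  have hV : IsOpen {xx : Fin k → EuclideanSpace ℝ (Fin m) | (A xx).det ≠ 0} := by
    have : {xx : Fin k → EuclideanSpace ℝ (Fin m) | (A xx).det ≠ 0}
        = (fun xx => (A xx).det) ⁻¹' ({0}ᶜ) := rfl
    rw [this]
    exact isOpen_compl_singleton.preimage hAc
  have hyV : (fun _ : Fin k => y) ∈ {xx : Fin k → EuclideanSpace ℝ (Fin m) | (A xx).det ≠ 0} := by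
    simp [hdet1]
  obtain ⟨I, uu, huu, hsub⟩ := (isOpen_pi_iff.mp hV) _ hyV
  refine ⟨⋂ i ∈ I, uu i, isOpen_biInter_finset (fun i hi => (huu i hi).1),
    Set.mem_biInter (fun i hi => (huu i hi).2), ?_⟩
  intro x hx
  have hxV : (A x).det ≠ 0 := hsub (fun i hi => (Set.mem_iInter₂.mp (hx i)) i hi)
  rw [eq_top_iff]
  rintro f -
  have hMle : (∏ i : Fin k, mIdealE (x i)) ≤ mTupleIdealE x := prod_le_mTuple x
  -- the basic relations
  have hvW : ∀ w, uF w - (∑ w', b x w w' • uF w')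
      ∈ D ⊔ (mTupleIdealE x).restrictScalars ℝ := by
    intro w
    obtain ⟨r, hrmem, hreq⟩ := hrep w x 0
    have heq : uF w - (∑ w', b x w w' • uF w') = d w + r := by
      apply DFunLike.ext
      intro t
      have h1 : (h w : EuclideanSpace ℝ (Fin m) → ℝ) t = (∑ i, c w x 0 i * (polyFn (g w i)) t) + r t := hreq t
      have h2 := hswap w x t
      have h3 : (uF w : EuclideanSpace ℝ (Fin m) → ℝ) t = d w t + h w t := by rw [hdh w]; simp
      have h4 : ((∑ w', b x w w' • uF w' : SmoothFnsE m) t : ℝ)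
          = ∑ w', b x w w' * (uF w' : SmoothFnsE m) t := by
        rw [smoothfns_sum_apply]
        exact Finset.sum_congr rfl fun w' _ => by simp
      have h5 : ((uF w - ∑ w', b x w w' • uF w' : SmoothFnsE m) t : ℝ)
          = uF w t - ((∑ w', b x w w' • uF w' : SmoothFnsE m) t : ℝ) := by simp
      have h6 : ((d w + r : SmoothFnsE m) t : ℝ) = d w t + r t := by simp
      rw [h5, h4, h3, h1, h2, h6]
      ring
    rw [heq]
    refine Submodule.add_mem _ (Submodule.mem_sup_left (hdD w)) (Submodule.mem_sup_right ?_)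
    exact hMle hrmem
  have hInv := Matrix.nonsing_inv_mul (A x) (isUnit_iff_ne_zero.mpr hxV)
  have huW : ∀ w0, uF w0 ∈ D ⊔ (mTupleIdealE x).restrictScalars ℝ := by
    intro w0
    have hAv : ∀ w, (∑ w', A x w w' • uF w') = uF w - (∑ w', b x w w' • uF w') := by
      intro w
      have hterm : ∀ w' : Fin m → Fin k, (A x w w' : ℝ) • uF w'
          = (if w = w' then (1:ℝ) else 0) • uF w' - b x w w' • uF w' := by
        intro w'
        rw [hA]
        simp [Matrix.sub_apply, Matrix.one_apply, sub_smul]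
      rw [Finset.sum_congr rfl fun w' _ => hterm w', Finset.sum_sub_distrib]
      congr 1
      have hite : ∀ w' : Fin m → Fin k, (if w = w' then (1:ℝ) else 0) • uF w'
          = if w = w' then uF w' else 0 := by
        intro w'; split <;> simp
      rw [Finset.sum_congr rfl fun w' _ => hite w']
      simp
    have hcalc : uF w0 = ∑ w, (A x)⁻¹ w0 w • (uF w - ∑ w', b x w w' • uF w') := by
      have step1 : uF w0 = ∑ w', ((A x)⁻¹ * A x) w0 w' • uF w' := by
        rw [hInv]
        have hite : ∀ w' : Fin m → Fin k, ((1 : Matrix (Fin m → Fin k) (Fin m → Fin k) ℝ) w0 w') • uF w'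
            = if w0 = w' then uF w' else 0 := by
          intro w'; rw [Matrix.one_apply]; split <;> simp
        rw [Finset.sum_congr rfl fun w' _ => hite w']
        simp
      have step2 : ∑ w', ((A x)⁻¹ * A x) w0 w' • uF w'
          = ∑ w, (A x)⁻¹ w0 w • (∑ w', A x w w' • uF w') := by
        simp only [Matrix.mul_apply, Finset.smul_sum, Finset.sum_smul, smul_smul]
        exact Finset.sum_comm
      rw [step1, step2]
      exact Finset.sum_congr rfl fun w _ => by rw [hAv w]
    rw [hcalc]
    exact Submodule.sum_mem _ fun w _ => Submodule.smul_mem _ _ (hvW w)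
  -- now conclude for arbitrary f
  obtain ⟨ι0, ifin0, g0, c0, hdeg0, -, hrep0⟩ := lemmaA k ℝ
    (fun p : EuclideanSpace ℝ (Fin m) × ℝ => (f : EuclideanSpace ℝ (Fin m) → ℝ) p.1)
    ((contMDiff_iff_contDiff.mp f.contMDiff).comp contDiff_fst)
  letI : Fintype ι0 := ifin0
  obtain ⟨r, hrmem, hreq⟩ := hrep0 x 0
  have hfeq : f = (∑ i, c0 x 0 i • polyFn (g0 i)) + r := by
    apply DFunLike.ext
    intro t
    have h1 : (f : EuclideanSpace ℝ (Fin m) → ℝ) t = (∑ i, c0 x 0 i * (polyFn (g0 i)) t) + r t := hreq t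
    have h2 : (((∑ i, c0 x 0 i • polyFn (g0 i)) + r : SmoothFnsE m) t : ℝ)
        = (∑ i, c0 x 0 i * (polyFn (g0 i)) t) + r t := by
      have h3 : ((∑ i, c0 x 0 i • polyFn (g0 i) : SmoothFnsE m) t : ℝ)
          = ∑ i, c0 x 0 i * (polyFn (g0 i)) t := by
        rw [smoothfns_sum_apply]
        exact Finset.sum_congr rfl fun i _ => by simp
      simp [h3]
    rw [h2, h1]
  rw [hfeq]
  refine Submodule.add_mem _ ?_ (Submodule.mem_sup_right (hMle hrmem))
  refine Submodule.sum_mem _ fun i _ => Submodule.smul_mem _ _ ?_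
  have hrepr : polyFn (g0 i) = ∑ w, MvPolynomial.coeff (expIdx w) (g0 i) • uF w := by
    apply DFunLike.ext
    intro t
    have hL : (polyFn (g0 i) : SmoothFnsE m) t
        = ∑ w, MvPolynomial.coeff (expIdx w) (g0 i) * (uF w : SmoothFnsE m) t := by
      conv_lhs => rw [polyFn_apply, ← rep_lemma (g0 i) (hdeg0 i)]
      rw [map_sum]
      refine Finset.sum_congr rfl fun w _ => ?_
      simp [huF, MvPolynomial.eval_monomial]
    rw [hL, smoothfns_sum_apply]
    exact Finset.sum_congr rfl fun w _ => by simp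
  rw [hrepr]
  exact Submodule.sum_mem _ fun w _ => Submodule.smul_mem _ _ (huW w)

end
end

section
/- Let y ∈ ℝ^m, let k ≥ 1, and let f ∈ C^∞(ℝ^m,ℝ). Then f belongs to the k-th power (𝔪_y)^k of the maximal ideal 𝔪_y if and only if the (k−1)-jet of f at y vanishes, i.e., D^j f(y) = 0 for all 0 ≤ j ≤ k−1, where D^j f denotes the j-th iterated Fréchet derivative. -/
open scoped Manifold
open Module

noncomputable section

variable {m : ℕ}

open MeasureTheory intervalIntegral in
/-- Differentiation under the integral for `x ↦ ∫ t in 0..1, c t • φ (y + t • (x - y))`. -/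
lemma hasFDerivAt_parint {F : Type*} [NormedAddCommGroup F] [NormedSpace ℝ F] [CompleteSpace F]
    (y : EuclideanSpace ℝ (Fin m)) (c : ℝ → ℝ) (hc : Continuous c)
    (φ : EuclideanSpace ℝ (Fin m) → F) (hφ : ContDiff ℝ (⊤ : ℕ∞) φ)
    (x₀ : EuclideanSpace ℝ (Fin m)) :
    HasFDerivAt (fun x => ∫ t in (0:ℝ)..1, c t • φ (y + t • (x - y)))
      (∫ t in (0:ℝ)..1, (c t * t) • fderiv ℝ φ (y + t • (x₀ - y))) x₀ := by
  have hφd : Differentiable ℝ φ := hφ.differentiable (by simp)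
  have hfc : Continuous (fderiv ℝ φ) := hφ.continuous_fderiv (by simp)
  set Φ : ℝ × EuclideanSpace ℝ (Fin m) → EuclideanSpace ℝ (Fin m) :=
    fun p => y + p.1 • (p.2 - y) with hΦ
  have hΦc : Continuous Φ := by fun_prop
  have hK : IsCompact (Φ '' (Set.Icc (0:ℝ) 1 ×ˢ Metric.closedBall x₀ 1)) :=
    (isCompact_Icc.prod (isCompact_closedBall _ _)).image hΦc
  obtain ⟨C, hC⟩ := hK.exists_bound_of_continuousOn hfc.continuousOn
  obtain ⟨Cc, hCc⟩ := (isCompact_Icc (a := (0:ℝ)) (b := 1)).exists_bound_of_continuousOn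
    hc.continuousOn
  have hdiff : ∀ t : ℝ, ∀ x : EuclideanSpace ℝ (Fin m),
      HasFDerivAt (fun x => c t • φ (y + t • (x - y)))
        ((c t * t) • fderiv ℝ φ (y + t • (x - y))) x := by
    intro t x
    have h1 : HasFDerivAt (fun x : EuclideanSpace ℝ (Fin m) => y + t • (x - y))
        (t • ContinuousLinearMap.id ℝ (EuclideanSpace ℝ (Fin m))) x := by
      simpa using (((hasFDerivAt_id x).sub_const y).const_smul t).const_add y
    have h2 := ((hφd _).hasFDerivAt.comp x h1).const_smul (c t)
    convert h2 using 1
    all_goals try rfl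
    ext v
    simp [ContinuousLinearMap.smul_apply, ContinuousLinearMap.comp_apply, ContinuousLinearMap.map_smul, mul_smul]
  haveI : SecondCountableTopologyEither ℝ (EuclideanSpace ℝ (Fin m) →L[ℝ] F) :=
    ⟨Or.inl inferInstance⟩
  apply intervalIntegral.hasFDerivAt_integral_of_dominated_of_fderiv_le
    (F' := fun x t => (c t * t) • fderiv ℝ φ (y + t • (x - y)))
    (bound := fun _ => Cc * C) (s := Metric.ball x₀ 1) (Metric.ball_mem_nhds x₀ one_pos)
  · filter_upwards with x
    exact ((hc.smul (hφ.continuous.comp (by fun_prop))).aestronglyMeasurable)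
  · exact ((hc.smul (hφ.continuous.comp (by fun_prop))).intervalIntegrable _ _)
  · exact (((hc.mul continuous_id).smul (hfc.comp (by fun_prop))).aestronglyMeasurable)
  · filter_upwards with t ht x hx
    rw [Set.uIoc_of_le zero_le_one] at ht
    have hz : Φ (t, x) ∈ Φ '' (Set.Icc (0:ℝ) 1 ×ˢ Metric.closedBall x₀ 1) := by
      refine ⟨(t, x), ⟨?_, ?_⟩, rfl⟩
      · exact ⟨le_of_lt ht.1, ht.2⟩
      · exact Metric.ball_subset_closedBall hx
    have ht1 : |t| ≤ 1 := by
      rw [abs_of_pos ht.1]; exact ht.2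
    have hct : ‖c t‖ ≤ Cc := hCc t ⟨le_of_lt ht.1, ht.2⟩
    have h1 : ‖fderiv ℝ φ (Φ (t, x))‖ ≤ C := hC _ hz
    have h2 : ‖(c t * t) • fderiv ℝ φ (y + t • (x - y))‖
        = |c t * t| * ‖fderiv ℝ φ (Φ (t, x))‖ := by
      have h3 := norm_smul (α := ℝ) (c t * t) (fderiv ℝ φ (y + t • (x - y)))
      rw [Real.norm_eq_abs] at h3
      rw [h3]
    rw [h2]
    have habs : |c t * t| ≤ Cc := by
      rw [abs_mul]
      calc |c t| * |t| ≤ Cc * 1 :=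
            mul_le_mul hct ht1 (abs_nonneg t) ((abs_nonneg _).trans hct)
        _ = Cc := mul_one Cc
    exact mul_le_mul habs h1 (norm_nonneg _) ((abs_nonneg _).trans habs)
  · exact intervalIntegrable_const
  · filter_upwards with t ht x hx using hdiff t x


open MeasureTheory intervalIntegral in
lemma contDiff_parint (y : EuclideanSpace ℝ (Fin m)) (n : ℕ) :
    ∀ (c : ℝ → ℝ), Continuous c →
    ∀ (F : Type) [NormedAddCommGroup F] [NormedSpace ℝ F] [CompleteSpace F],
    ∀ (φ : EuclideanSpace ℝ (Fin m) → F), ContDiff ℝ (⊤ : ℕ∞) φ →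
      ContDiff ℝ n (fun x => ∫ t in (0:ℝ)..1, c t • φ (y + t • (x - y))) := by
  induction n with
  | zero =>
    intro c hc F _ _ _ φ hφ
    rw [show ((0 : ℕ) : WithTop ℕ∞) = 0 from rfl, contDiff_zero]
    exact continuous_iff_continuousAt.mpr fun x =>
      (hasFDerivAt_parint y c hc φ hφ x).differentiableAt.continuousAt
  | succ n IH =>
    intro c hc F _ _ _ φ hφ
    rw [show ((n + 1 : ℕ) : WithTop ℕ∞) = (n : WithTop ℕ∞) + 1 by push_cast; ring,
      contDiff_succ_iff_fderiv]
    refine ⟨fun x => (hasFDerivAt_parint y c hc φ hφ x).differentiableAt, ?_, ?_⟩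
    · intro h; simp at h
    · have hfd : (fderiv ℝ fun x => ∫ t in (0:ℝ)..1, c t • φ (y + t • (x - y)))
          = fun x => ∫ t in (0:ℝ)..1, (c t * t) • fderiv ℝ φ (y + t • (x - y)) :=
        funext fun x => (hasFDerivAt_parint y c hc φ hφ x).fderiv
      rw [hfd]
      exact IH (fun t => c t * t) (hc.mul continuous_id)
        (EuclideanSpace ℝ (Fin m) →L[ℝ] F) (fderiv ℝ φ)
        (contDiff_infty_iff_fderiv.mp hφ).2


open MeasureTheory intervalIntegral in
lemma contDiff_top_parint (y : EuclideanSpace ℝ (Fin m))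
    (c : ℝ → ℝ) (hc : Continuous c)
    (F : Type) [NormedAddCommGroup F] [NormedSpace ℝ F] [CompleteSpace F]
    (φ : EuclideanSpace ℝ (Fin m) → F) (hφ : ContDiff ℝ (⊤ : ℕ∞) φ) :
    ContDiff ℝ (⊤ : ℕ∞) (fun x => ∫ t in (0:ℝ)..1, c t • φ (y + t • (x - y))) :=
  contDiff_infty.mpr fun n => contDiff_parint y n c hc F φ hφ


open MeasureTheory intervalIntegral in
lemma itf_fderiv_eq_zero {F : Type} [NormedAddCommGroup F] [NormedSpace ℝ F]
    (φ : EuclideanSpace ℝ (Fin m) → F) (y : EuclideanSpace ℝ (Fin m)) (i : ℕ)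
    (h : iteratedFDeriv ℝ (i + 1) φ y = 0) : iteratedFDeriv ℝ i (fderiv ℝ φ) y = 0 := by
  rw [← norm_eq_zero, norm_iteratedFDeriv_fderiv, h, norm_zero]


open MeasureTheory intervalIntegral in
lemma vanish_parint (y : EuclideanSpace ℝ (Fin m)) (n : ℕ) :
    ∀ (c : ℝ → ℝ), Continuous c →
    ∀ (F : Type) [NormedAddCommGroup F] [NormedSpace ℝ F] [CompleteSpace F],
    ∀ (φ : EuclideanSpace ℝ (Fin m) → F), ContDiff ℝ (⊤ : ℕ∞) φ →
      (∀ i ≤ n, iteratedFDeriv ℝ i φ y = 0) →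
      iteratedFDeriv ℝ n (fun x => ∫ t in (0:ℝ)..1, c t • φ (y + t • (x - y))) y = 0 := by
  induction n with
  | zero =>
    intro c hc F _ _ _ φ hφ hvan
    have hφy : φ y = 0 := by
      have h0 := hvan 0 le_rfl
      rwa [← norm_eq_zero, norm_iteratedFDeriv_zero, norm_eq_zero] at h0
    ext v
    simp [iteratedFDeriv_zero_apply, hφy]
  | succ n IH =>
    intro c hc F _ _ _ φ hφ hvan
    ext v
    rw [iteratedFDeriv_succ_apply_right]
    have hfd : (fun z => fderiv ℝ (fun x => ∫ t in (0:ℝ)..1, c t • φ (y + t • (x - y))) z)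
        = fun z => ∫ t in (0:ℝ)..1, (c t * t) • fderiv ℝ φ (y + t • (z - y)) :=
      funext fun z => (hasFDerivAt_parint y c hc φ hφ z).fderiv
    rw [hfd]
    have h0 := IH (fun t => c t * t) (hc.mul continuous_id)
      (EuclideanSpace ℝ (Fin m) →L[ℝ] F) (fderiv ℝ φ)
      (contDiff_infty_iff_fderiv.mp hφ).2
      (fun i hi => itf_fderiv_eq_zero φ y i (hvan (i + 1) (by omega)))
    rw [h0]
    simp


open MeasureTheory intervalIntegral in
lemma hadamard_repr (y : EuclideanSpace ℝ (Fin m)) (f : EuclideanSpace ℝ (Fin m) → ℝ)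
    (hf : ContDiff ℝ (⊤ : ℕ∞) f) (h0 : f y = 0) (x : EuclideanSpace ℝ (Fin m)) :
    f x = ∑ i : Fin m, (x i - y i) *
      ∫ t in (0:ℝ)..1, fderiv ℝ f (y + t • (x - y)) (EuclideanSpace.single i 1) := by
  have hfd : Differentiable ℝ f := hf.differentiable (by simp)
  have hfc : Continuous (fderiv ℝ f) := hf.continuous_fderiv (by simp)
  have hder : ∀ t : ℝ, HasDerivAt (fun s : ℝ => f (y + s • (x - y)))
      (fderiv ℝ f (y + t • (x - y)) (x - y)) t := by
    intro t
    have h1 : HasDerivAt (fun s : ℝ => y + s • (x - y)) (x - y) t := by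
      simpa using ((hasDerivAt_id t).smul_const (x - y)).const_add y
    exact (hfd _).hasFDerivAt.comp_hasDerivAt t h1
  have hcont : Continuous fun t : ℝ => fderiv ℝ f (y + t • (x - y)) (x - y) :=
    (hfc.comp (by fun_prop)).clm_apply continuous_const
  have key := intervalIntegral.integral_eq_sub_of_hasDerivAt (fun t _ => hder t)
    (hcont.intervalIntegrable 0 1)
  simp only [one_smul, zero_smul, add_zero, add_sub_cancel, h0, sub_zero] at key
  have hxy : x - y = ∑ i : Fin m, (x i - y i) • (EuclideanSpace.single i (1:ℝ)) := by
    have h := ((EuclideanSpace.basisFun (Fin m) ℝ).sum_repr (x - y)).symm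
    simpa [EuclideanSpace.basisFun_repr, EuclideanSpace.basisFun_apply,
      PiLp.sub_apply] using h
  calc f x = ∫ t in (0:ℝ)..1, fderiv ℝ f (y + t • (x - y)) (x - y) := key.symm
    _ = ∫ t in (0:ℝ)..1, ∑ i : Fin m,
          (x i - y i) * fderiv ℝ f (y + t • (x - y)) (EuclideanSpace.single i 1) := by
        refine intervalIntegral.integral_congr fun t _ => ?_
        set L := fderiv ℝ f (y + t • (x - y)) with hL
        rw [hxy]
        simp only [_root_.map_sum, _root_.map_smul, smul_eq_mul]
    _ = ∑ i : Fin m, ∫ t in (0:ℝ)..1,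
          (x i - y i) * fderiv ℝ f (y + t • (x - y)) (EuclideanSpace.single i 1) := by
        refine intervalIntegral.integral_finset_sum fun i _ => ?_
        exact (continuous_const.mul ((hfc.comp (by fun_prop)).clm_apply continuous_const)).intervalIntegrable 0 1
    _ = ∑ i : Fin m, (x i - y i) *
          ∫ t in (0:ℝ)..1, fderiv ℝ f (y + t • (x - y)) (EuclideanSpace.single i 1) := by
        exact Finset.sum_congr rfl fun i _ => intervalIntegral.integral_const_mul _ _

/-- For `y ∈ ℝ^m`, `k ≥ 1` and a smooth function `f`, one has
`f ∈ (𝔪_y)^k` if and only if the `(k-1)`-jet of `f` at `y` vanishes, i.e. the `j`-th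
iterated Fréchet derivative of `f` at `y` is zero for all `j < k`. -/
theorem mem_pow_mIdeal_iff_jet_vanishes
    (m : ℕ) (y : EuclideanSpace ℝ (Fin m)) (k : ℕ) (hk : 1 ≤ k) (f : SmoothFnsE m) :
    f ∈ (mIdealE y) ^ k ↔
      ∀ j < k, iteratedFDeriv ℝ j (f : EuclideanSpace ℝ (Fin m) → ℝ) y = 0 := by
  have smooth : ∀ g : SmoothFnsE m, ContDiff ℝ (⊤ : ℕ∞) ⇑g := fun g =>
    contMDiff_iff_contDiff.mp g.contMDiff
  constructor
  · -- forward direction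
    have main : ∀ K : ℕ, ∀ g : SmoothFnsE m, g ∈ (mIdealE y) ^ K →
        ∀ j < K, iteratedFDeriv ℝ j (⇑g) y = 0 := by
      intro K
      induction K with
      | zero => intro g _ j hj; omega
      | succ K IH =>
        intro g hg
        rw [pow_succ] at hg
        refine Submodule.mul_induction_on hg ?_ ?_
        · intro a ha b hb j hj
          have hbz : ⇑b y = 0 := hb
          rw [show ⇑(a * b) = fun x => ⇑a x * ⇑b x from rfl, ← norm_eq_zero]
          apply le_antisymm _ (norm_nonneg _)
          refine le_trans (norm_iteratedFDeriv_mul_le (𝕜 := ℝ) (N := ((⊤:ℕ∞) : WithTop ℕ∞))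
            (smooth a) (smooth b) y (by exact_mod_cast le_top)) (le_of_eq ?_)
          refine Finset.sum_eq_zero fun i hi => ?_
          rw [Finset.mem_range] at hi
          by_cases hik : i < K
          · rw [IH a ha i hik, norm_zero, mul_zero, zero_mul]
          · have hij : i = j ∧ j = K := by omega
            have hji : j - i = 0 := by omega
            rw [hji, norm_iteratedFDeriv_zero, hbz, norm_zero, mul_zero]
        · intro u v hu hv j hj
          rw [show ⇑(u + v) = fun x => ⇑u x + ⇑v x from rfl]
          have h1 : ContDiff ℝ (j : ℕ) ⇑u := (smooth u).of_le (by exact_mod_cast le_top)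
          have h2 : ContDiff ℝ (j : ℕ) ⇑v := (smooth v).of_le (by exact_mod_cast le_top)
          rw [show (fun x => ⇑u x + ⇑v x) = ⇑u + ⇑v from rfl,
            iteratedFDeriv_add_apply h1.contDiffAt h2.contDiffAt, hu j hj, hv j hj, add_zero]
    exact main k f
  · -- backward direction
    have main : ∀ K : ℕ, ∀ g : SmoothFnsE m,
        (∀ j < K, iteratedFDeriv ℝ j (⇑g) y = 0) → g ∈ (mIdealE y) ^ K := by
      intro K
      induction K with
      | zero => intro g _; simp [pow_zero, Ideal.one_eq_top]
      | succ K IH =>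
        intro g hg
        have hg0 : ⇑g y = 0 := by
          have h0 := hg 0 (by omega)
          have hn : ‖(⇑g) y‖ = 0 := by
            rw [← norm_iteratedFDeriv_zero (𝕜 := ℝ), h0, norm_zero]
          exact norm_eq_zero.mp hn
        have hgfd : ContDiff ℝ (⊤ : ℕ∞) (fderiv ℝ ⇑g) := (contDiff_infty_iff_fderiv.mp (smooth g)).2
        set φ : Fin m → (EuclideanSpace ℝ (Fin m) → ℝ) :=
          fun i z => fderiv ℝ (⇑g) z (EuclideanSpace.single i 1) with hφdef
        have hφs : ∀ i, ContDiff ℝ (⊤ : ℕ∞) (φ i) := fun i => hgfd.clm_apply contDiff_const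
        have hφvan : ∀ i, ∀ j < K, iteratedFDeriv ℝ j (φ i) y = 0 := by
          intro i j hj
          have hL : φ i = (ContinuousLinearMap.apply ℝ ℝ (EuclideanSpace.single i (1:ℝ))) ∘
              (fderiv ℝ ⇑g) := rfl
          rw [hL, ContinuousLinearMap.iteratedFDeriv_comp_left _ hgfd.contDiffAt (by exact_mod_cast le_top),
            itf_fderiv_eq_zero (⇑g) y j (hg (j + 1) (by omega))]
          ext w
          simp
        set gi : Fin m → SmoothFnsE m := fun i =>
          ⟨fun x => ∫ t in (0:ℝ)..1, (1:ℝ) • φ i (y + t • (x - y)),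
            contMDiff_iff_contDiff.mpr
              (contDiff_top_parint y (fun _ => (1:ℝ)) continuous_const ℝ (φ i) (hφs i))⟩ with hgidef
        set li : Fin m → SmoothFnsE m := fun i =>
          ⟨fun x => x i - y i,
            contMDiff_iff_contDiff.mpr (by fun_prop)⟩
          with hlidef
        have hrepr : g = ∑ i : Fin m, li i * gi i := by
          apply ContMDiffMap.ext
          intro x
          have hsum : (∑ i : Fin m, li i * gi i) x = ∑ i : Fin m, (li i x) * (gi i x) :=
            map_sum (ContMDiffMap.evalRingHom x) (fun i => li i * gi i) Finset.univ
          rw [hsum]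
          have hha := hadamard_repr y (⇑g) (smooth g) hg0 x
          refine hha.trans (Finset.sum_congr rfl fun i _ => ?_).symm
          show (x i - y i) * (∫ t in (0:ℝ)..1, (1:ℝ) • φ i (y + t • (x - y))) = _
          simp only [one_smul, hφdef]
        rw [hrepr, pow_succ']
        refine Ideal.sum_mem _ fun i _ => ?_
        refine Ideal.mul_mem_mul (show li i ∈ mIdealE y from sub_self _) (IH (gi i) ?_)
        intro j hj
        have := vanish_parint y j (fun _ => (1:ℝ)) continuous_const ℝ (φ i) (hφs i)
          (fun i' hi' => hφvan i i' (by omega))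
        exact this
    exact main k f
end
end
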